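/- For the exponential utility u(t) = (1/γ)(1 - e^{-γt}) with γ > 0, the Optimized Certainty Equivalent coincides with the Certainty Equivalent: sup_{η∈ℝ} {η + E[u(X-η)]} = u^{-1}(E[u(X)]) for any bounded random variable X. -/

import Mathlib

open MeasureTheory Real

/-- For the exponential utility `u t = (1/γ)(1 - exp (-γ t))` with `γ > 0`,
the Optimized Certainty Equivalent coincides with the Certainty Equivalent
`u⁻¹(E[u(X)]) = -(1/γ) ln (1 - γ E[u(X)])` for any bounded random variable `X`. -/
theorem oce_exponential_eq_certaintyEquivalent
    {Ω : Type*} [MeasurableSpace Ω] (μ : Measure Ω) [IsProbabilityMeasure μ]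
    (X : Ω → ℝ) (hX : Measurable X) (C : ℝ) (hbdd : ∀ ω, |X ω| ≤ C)
    (γ : ℝ) (hγ : 0 < γ) :
    (⨆ η : ℝ, (η + ∫ ω, (1 - Real.exp (-γ * (X ω - η))) / γ ∂μ))
      = -(1 / γ) * Real.log (1 - γ * ∫ ω, (1 - Real.exp (-γ * X ω)) / γ ∂μ) := by
  have hM_int : Integrable (fun ω => Real.exp (-γ * X ω)) μ := by
    refine Integrable.mono' (integrable_const (Real.exp (γ * C)))
      ((hX.const_mul (-γ)).exp.aestronglyMeasurable) ?_
    filter_upwards with ω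
    rw [Real.norm_eq_abs, abs_of_pos (Real.exp_pos _)]
    apply Real.exp_le_exp.2
    nlinarith [abs_le.1 (hbdd ω)]
  set M := ∫ ω, Real.exp (-γ * X ω) ∂μ with hMdef
  have hMpos : 0 < M := by
    apply integral_exp_pos hM_int
  -- integral computation
  have hint : ∀ η : ℝ, (∫ ω, (1 - Real.exp (-γ * (X ω - η))) / γ ∂μ)
      = (1 - Real.exp (γ * η) * M) / γ := by
    intro η
    have h1 : ∀ ω, (1 - Real.exp (-γ * (X ω - η))) / γ
        = (1 - Real.exp (γ * η) * Real.exp (-γ * X ω)) / γ := by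
      intro ω; rw [← Real.exp_add]; ring_nf
    simp_rw [h1]
    rw [integral_div, integral_sub (integrable_const 1) (hM_int.const_mul _),
      integral_const_mul, integral_const]
    simp [hMdef]
  have hub : ∀ η : ℝ, η + (1 - Real.exp (γ * η) * M) / γ ≤ -(1 / γ) * Real.log M := by
    intro η
    have key : γ * η + Real.log M ≤ Real.exp (γ * η) * M - 1 := by
      have h := Real.log_le_sub_one_of_pos (mul_pos (Real.exp_pos (γ * η)) hMpos)
      rwa [Real.log_mul (Real.exp_ne_zero _) hMpos.ne', Real.log_exp] at h
    rw [← sub_nonneg]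
    have heq : -(1 / γ) * Real.log M - (η + (1 - Real.exp (γ * η) * M) / γ)
        = (Real.exp (γ * η) * M - 1 - (γ * η + Real.log M)) / γ := by
      field_simp
      ring
    rw [heq]
    exact div_nonneg (by linarith) hγ.le
  have hRHS : 1 - γ * ∫ ω, (1 - Real.exp (-γ * X ω)) / γ ∂μ = M := by
    have h0 := hint 0
    simp only [sub_zero, mul_zero, Real.exp_zero, one_mul] at h0
    rw [h0]
    field_simp
    ring
  rw [hRHS]
  apply le_antisymm
  · apply ciSup_le
    intro η
    rw [hint η]
    exact hub η
  · have hatt : -(1 / γ) * Real.log M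
        + (1 - Real.exp (γ * (-(1 / γ) * Real.log M)) * M) / γ = -(1 / γ) * Real.log M := by
      have : γ * (-(1 / γ) * Real.log M) = -Real.log M := by
        field_simp
      rw [this, Real.exp_neg, Real.exp_log hMpos]
      field_simp
      ring
    calc -(1 / γ) * Real.log M
        = -(1 / γ) * Real.log M
          + ∫ ω, (1 - Real.exp (-γ * (X ω - (-(1 / γ) * Real.log M)))) / γ ∂μ := by
          rw [hint]; linarith [hatt]
      _ ≤ ⨆ η : ℝ, (η + ∫ ω, (1 - Real.exp (-γ * (X ω - η))) / γ ∂μ) := by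
          apply le_ciSup (f := fun η : ℝ => η + ∫ ω, (1 - Real.exp (-γ * (X ω - η))) / γ ∂μ)
          refine ⟨-(1 / γ) * Real.log M, ?_⟩
          rintro x ⟨η, rfl⟩
          show η + ∫ ω, (1 - Real.exp (-γ * (X ω - η))) / γ ∂μ ≤ -(1 / γ) * Real.log M
          rw [hint η]
          exact hub η
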